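/- Let σ: A × B → k be a Hopf pairing, φ: π → Aut_Hopf(A) and ψ: π → Aut_Hopf(B) actions by Hopf automorphisms with ψ (σ,φ)-compatible, i.e., σ(φ_β(a), ψ_β(b)) = σ(a,b) for all a, b, β. Then the maps φ_β ⊗ ψ_β: D(A,B;σ,φ_α) → D(A,B;σ,φ_{βαβ⁻¹}) are algebra isomorphisms satisfying the crossing axioms: they intertwine the comultiplications Δ_{α,γ}, preserve the counit, and satisfy (φ_α⊗ψ_α)∘(φ_β⊗ψ_β) = φ_{αβ}⊗ψ_{αβ}. -/

import Mathlib

open TensorProduct Coalgebra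

/-- A Hopf pairing between two Hopf algebras `A` and `B` over a field `k`: a bilinear map
`σ : A × B → k` satisfying `σ(a, bb') = σ(a₍₁₎, b) σ(a₍₂₎, b')`,
`σ(aa', b) = σ(a, b₍₂₎) σ(a', b₍₁₎)`, `σ(a, 1) = ε(a)` and `σ(1, b) = ε(b)`. -/
structure HopfPairing (k A B : Type) [Field k] [Ring A] [HopfAlgebra k A]
    [Ring B] [HopfAlgebra k B] where
  σ : A →ₗ[k] B →ₗ[k] k
  pair_mul_right : ∀ (a : A) (b b' : B),
    σ a (b * b') = LinearMap.mul' k k (TensorProduct.map (σ.flip b) (σ.flip b') (comul (R := k) a))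
  pair_mul_left : ∀ (a a' : A) (b : B),
    σ (a * a') b = LinearMap.mul' k k (TensorProduct.map (σ a') (σ a) (comul (R := k) b))
  pair_one_right : ∀ a : A, σ a 1 = counit (R := k) a
  pair_one_left : ∀ b : B, σ 1 b = counit (R := k) b
variable (k : Type) [Field k]

/-- The iterated comultiplication `(Δ ⊗ id) ∘ Δ : A → (A ⊗ A) ⊗ A`. -/
noncomputable def comul3 (A : Type) [Ring A] [HopfAlgebra k A] :
    A →ₗ[k] (A ⊗[k] A) ⊗[k] A :=
  (LinearMap.rTensor A (Coalgebra.comul (R := k) (A := A))) ∘ₗ Coalgebra.comul (R := k) (A := A)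

/-- `m` is the product of the twisted double `D(A,B;σ,φ)`: on pure tensors it is given by
`(a ⊗ b)(a' ⊗ b') = σ(φ(a'₍₁₎), S(b₍₁₎)) σ(a'₍₃₎, b₍₃₎) (a a'₍₂₎ ⊗ b₍₂₎ b')`,
expressed via arbitrary finite representations of the iterated comultiplications. -/
def IsTwistedDoubleMul {A B : Type} [Ring A] [HopfAlgebra k A] [Ring B] [HopfAlgebra k B]
    (p : HopfPairing k A B) (φ : A →ₐ[k] A)
    (m : (A ⊗[k] B) →ₗ[k] (A ⊗[k] B) →ₗ[k] (A ⊗[k] B)) : Prop :=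
  ∀ (a a' : A) (b b' : B) (ι κ : Type) (s : Finset ι) (t : Finset κ)
    (u v w : ι → A) (pb q r : κ → B),
    comul3 k A a' = ∑ i ∈ s, (u i ⊗ₜ[k] v i) ⊗ₜ[k] w i →
    comul3 k B b = ∑ j ∈ t, (pb j ⊗ₜ[k] q j) ⊗ₜ[k] r j →
    m (a ⊗ₜ[k] b) (a' ⊗ₜ[k] b') = ∑ i ∈ s, ∑ j ∈ t,
      (p.σ (φ (u i)) (HopfAlgebra.antipode (R := k) (pb j)) * p.σ (w i) (r j)) •
        ((a * v i) ⊗ₜ[k] (q j * b'))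

section ConvAux
variable {k : Type} [Field k] {B : Type} [Ring B] [HopfAlgebra k B]

/-- Convolution product on linear endomorphisms of a Hopf algebra. -/
noncomputable def convMul (x y : B →ₗ[k] B) : B →ₗ[k] B :=
  LinearMap.mul' k B ∘ₗ TensorProduct.map x y ∘ₗ Coalgebra.comul

/-- The convolution unit. -/
noncomputable def convOne : B →ₗ[k] B :=
  Algebra.linearMap k B ∘ₗ Coalgebra.counit

lemma convMul_apply (x y : B →ₗ[k] B) {b : B} {ι : Type*} (r : Coalgebra.Repr k b ι) :
    convMul x y b = ∑ i ∈ r.index, x (r.left i) * y (r.right i) := by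
  simp [convMul, ← r.eq, map_sum]

lemma convOne_apply (b : B) : (convOne (k := k) (B := B)) b
    = Coalgebra.counit (R := k) b • 1 := by
  simp [convOne, Algebra.algebraMap_eq_smul_one]

lemma convMul_assoc (x y z : B →ₗ[k] B) :
    convMul (convMul x y) z = convMul x (convMul y z) := by
  ext b
  set r := ℛ k b
  set a₁ : (i : r.ι) → Coalgebra.Repr k (r.left i) (B × B) := fun i => ℛ k (r.left i)
  set a₂ : (i : r.ι) → Coalgebra.Repr k (r.right i) (B × B) := fun i => ℛ k (r.right i)
  have key := Coalgebra.sum_map_tmul_tmul_eq (R := k) x y z b (repr := r) (a₁ := a₁) (a₂ := a₂)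
  apply_fun (LinearMap.mul' k B ∘ₗ LinearMap.lTensor B (LinearMap.mul' k B)) at key
  simp only [map_sum, LinearMap.comp_apply, LinearMap.lTensor_tmul, LinearMap.mul'_apply] at key
  rw [convMul_apply (convMul x y) z r, convMul_apply x (convMul y z) r]
  calc ∑ i ∈ r.index, convMul x y (r.left i) * z (r.right i)
      = ∑ i ∈ r.index, ∑ j ∈ (a₁ i).index,
          x ((a₁ i).left j) * ((y ((a₁ i).right j)) * z (r.right i)) := by
        refine Finset.sum_congr rfl fun i _ => ?_
        rw [convMul_apply x y (a₁ i), Finset.sum_mul]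
        simp [mul_assoc]
    _ = ∑ i ∈ r.index, ∑ j ∈ (a₂ i).index,
          x (r.left i) * (y ((a₂ i).left j) * z ((a₂ i).right j)) := key.symm
    _ = ∑ i ∈ r.index, x (r.left i) * convMul y z (r.right i) := by
        refine Finset.sum_congr rfl fun i _ => ?_
        rw [convMul_apply y z (a₂ i), Finset.mul_sum]

lemma convOne_mul (x : B →ₗ[k] B) : convMul convOne x = x := by
  ext b
  set r := ℛ k b
  rw [convMul_apply convOne x r]
  have key := Coalgebra.sum_counit_tmul_eq (R := k) r
  apply_fun (TensorProduct.lid k B) at key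
  simp only [map_sum, lid_tmul, one_smul] at key
  calc ∑ i ∈ r.index, convOne (r.left i) * x (r.right i)
      = x (∑ i ∈ r.index, Coalgebra.counit (R := k) (r.left i) • r.right i) := by
        rw [map_sum]
        exact Finset.sum_congr rfl fun i _ => by simp [convOne_apply, smul_mul_assoc]
    _ = x b := by rw [key]

lemma convMul_one (x : B →ₗ[k] B) : convMul x convOne = x := by
  ext b
  set r := ℛ k b
  rw [convMul_apply x convOne r]
  have key := Coalgebra.sum_tmul_counit_eq (R := k) r
  apply_fun (TensorProduct.rid k B) at key
  simp only [map_sum, rid_tmul, one_smul] at key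
  calc ∑ i ∈ r.index, x (r.left i) * convOne (r.right i)
      = x (∑ i ∈ r.index, Coalgebra.counit (R := k) (r.right i) • r.left i) := by
        rw [map_sum]
        exact Finset.sum_congr rfl fun i _ => by simp [convOne_apply, mul_smul_comm, mul_comm]
    _ = x b := by rw [key]

lemma convMul_antipode_id :
    convMul (HopfAlgebra.antipode (R := k) (A := B)) LinearMap.id = convOne := by
  ext b
  set r := ℛ k b
  rw [convMul_apply _ _ r, convOne_apply]
  simpa using HopfAlgebra.sum_antipode_mul_eq_smul (R := k) r

lemma convMul_id_antipode :
    convMul LinearMap.id (HopfAlgebra.antipode (R := k) (A := B)) = convOne := by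
  ext b
  set r := ℛ k b
  rw [convMul_apply _ _ r, convOne_apply]
  simpa using HopfAlgebra.sum_mul_antipode_eq_smul (R := k) r

/-- Antipode naturality for a bialgebra endomorphism. -/
lemma antipode_naturality (F : B →ₐ[k] B)
    (hc : ∀ b, Coalgebra.comul (R := k) (F b)
      = TensorProduct.map F.toLinearMap F.toLinearMap (Coalgebra.comul b))
    (he : ∀ b, Coalgebra.counit (R := k) (F b) = Coalgebra.counit (R := k) b) (b : B) :
    HopfAlgebra.antipode (R := k) (F b) = F (HopfAlgebra.antipode (R := k) b) := by
  set S : B →ₗ[k] B := HopfAlgebra.antipode (R := k) (A := B)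
  -- conv F (F ∘ S) = convOne
  have h1 : convMul F.toLinearMap (F.toLinearMap ∘ₗ S) = convOne := by
    ext c
    set r := ℛ k c
    rw [convMul_apply _ _ r, convOne_apply]
    have key := HopfAlgebra.sum_mul_antipode_eq_smul (R := k) r
    calc ∑ i ∈ r.index, F.toLinearMap (r.left i) * (F.toLinearMap ∘ₗ S) (r.right i)
        = F (∑ i ∈ r.index, r.left i * S (r.right i)) := by
          rw [map_sum]; exact Finset.sum_congr rfl fun i _ => by simp
      _ = Coalgebra.counit (R := k) c • 1 := by rw [key, map_smul, map_one]
  -- conv (S ∘ F) F = convOne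
  have h2 : convMul (S ∘ₗ F.toLinearMap) F.toLinearMap = convOne := by
    ext c
    set r := ℛ k c
    -- a representation of F c
    set rF : Coalgebra.Repr k (F c) (B × B) :=
      { index := r.index, left := fun i => F (r.left i),
        right := fun i => F (r.right i),
        eq := by rw [hc c, ← r.eq, map_sum]; simp }
    rw [convMul_apply _ _ r, convOne_apply]
    have key := HopfAlgebra.sum_antipode_mul_eq_smul (R := k) rF
    simp only [rF] at key
    calc ∑ i ∈ r.index, (S ∘ₗ F.toLinearMap) (r.left i) * F.toLinearMap (r.right i)
        = Coalgebra.counit (R := k) (F c) • 1 := by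
          rw [← key]; exact Finset.sum_congr rfl fun i _ => by simp [S]
      _ = Coalgebra.counit (R := k) c • 1 := by rw [he]
  have : S ∘ₗ F.toLinearMap = F.toLinearMap ∘ₗ S := by
    calc S ∘ₗ F.toLinearMap = convMul (S ∘ₗ F.toLinearMap) convOne := (convMul_one _).symm
      _ = convMul (S ∘ₗ F.toLinearMap) (convMul F.toLinearMap (F.toLinearMap ∘ₗ S)) := by
          rw [h1]
      _ = convMul (convMul (S ∘ₗ F.toLinearMap) F.toLinearMap) (F.toLinearMap ∘ₗ S) := by
          rw [convMul_assoc]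
      _ = convMul convOne (F.toLinearMap ∘ₗ S) := by rw [h2]
      _ = F.toLinearMap ∘ₗ S := convOne_mul _
  exact congr($this b)

end ConvAux

lemma conj_aux {k : Type} [Field k] {A : Type} [Ring A] [Algebra k A] {π : Type} [Group π]
    (φ : π →* (A ≃ₐ[k] A)) (β γ : π) (a : A) :
    φ (β * γ * β⁻¹) (φ β a) = φ β (φ γ a) := by
  have h : φ (β * γ * β⁻¹) * φ β = φ β * φ γ := by
    rw [← map_mul, ← map_mul]; congr 1; group
  rw [← AlgEquiv.mul_apply, h, AlgEquiv.mul_apply]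

/-- If `ψ` is a `(σ,φ)`-compatible action, the maps `φ_β ⊗ ψ_β` form a crossing of the twisted
double: they are algebra isomorphisms `D(A,B;σ,φ_α) → D(A,B;σ,φ_{βαβ⁻¹})` intertwining the
comultiplications, preserving the counit, and composing as `(φ_α⊗ψ_α)∘(φ_β⊗ψ_β) = φ_{αβ}⊗ψ_{αβ}`. -/
theorem twistedDouble_crossing {A B : Type} [Ring A] [HopfAlgebra k A]
    [Ring B] [HopfAlgebra k B] (p : HopfPairing k A B)
    (π : Type) [Group π] (φ : π →* (A ≃ₐ[k] A)) (ψ : π →* (B ≃ₐ[k] B))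
    (hφc : ∀ (g : π) (a : A), Coalgebra.comul (R := k) (φ g a)
      = TensorProduct.map (φ g).toLinearMap (φ g).toLinearMap (Coalgebra.comul a))
    (hφe : ∀ (g : π) (a : A), Coalgebra.counit (R := k) (φ g a) = Coalgebra.counit (R := k) a)
    (hψc : ∀ (g : π) (b : B), Coalgebra.comul (R := k) (ψ g b)
      = TensorProduct.map (ψ g).toLinearMap (ψ g).toLinearMap (Coalgebra.comul b))
    (hψe : ∀ (g : π) (b : B), Coalgebra.counit (R := k) (ψ g b) = Coalgebra.counit (R := k) b)
    (hcompat : ∀ (β : π) (a : A) (b : B), p.σ (φ β a) (ψ β b) = p.σ a b)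
    (m : π → ((A ⊗[k] B) →ₗ[k] (A ⊗[k] B) →ₗ[k] (A ⊗[k] B)))
    (hm : ∀ α : π, IsTwistedDoubleMul k p (φ α).toAlgHom (m α))
    (Δfam : π → π → ((A ⊗[k] B) →ₗ[k] (A ⊗[k] B) ⊗[k] (A ⊗[k] B)))
    (hΔ : ∀ (α β : π) (a : A) (b : B) (ι κ : Type) (s : Finset ι) (t : Finset κ)
      (u v : ι → A) (pb q : κ → B),
      Coalgebra.comul (R := k) a = ∑ i ∈ s, u i ⊗ₜ[k] v i →
      Coalgebra.comul (R := k) b = ∑ j ∈ t, pb j ⊗ₜ[k] q j →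
      Δfam α β (a ⊗ₜ[k] b) = ∑ i ∈ s, ∑ j ∈ t,
        ((φ β (u i)) ⊗ₜ[k] pb j) ⊗ₜ[k] (v i ⊗ₜ[k] q j)) :
    let χ : π → ((A ⊗[k] B) →ₗ[k] (A ⊗[k] B)) :=
      fun β => TensorProduct.map (φ β).toLinearMap (ψ β).toLinearMap
    (∀ (α β : π) (x y : A ⊗[k] B),
      χ β (m α x y) = m (β * α * β⁻¹) (χ β x) (χ β y)) ∧
    (∀ β : π, χ β ((1 : A) ⊗ₜ[k] (1 : B)) = (1 : A) ⊗ₜ[k] (1 : B)) ∧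
    (∀ β : π, Function.Bijective (χ β)) ∧
    (∀ (α γ β : π) (x : A ⊗[k] B),
      TensorProduct.map (χ β) (χ β) (Δfam α γ x)
        = Δfam (β * α * β⁻¹) (β * γ * β⁻¹) (χ β x)) ∧
    (∀ (β : π) (x : A ⊗[k] B),
      (LinearMap.mul' k k ∘ₗ TensorProduct.map (Coalgebra.counit (R := k) (A := A))
        (Coalgebra.counit (R := k) (A := B))) (χ β x)
      = (LinearMap.mul' k k ∘ₗ TensorProduct.map (Coalgebra.counit (R := k) (A := A))
        (Coalgebra.counit (R := k) (A := B))) x) ∧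
    (∀ (α β : π) (x : A ⊗[k] B), χ α (χ β x) = χ (α * β) x) := by

  intro χ
  have hχ : ∀ (β : π) (a : A) (b : B), χ β (a ⊗ₜ[k] b) = φ β a ⊗ₜ[k] ψ β b := by
    intro β a b
    simp [χ, TensorProduct.map_tmul]
  have hS : ∀ (β : π) (b : B),
      HopfAlgebra.antipode (R := k) (ψ β b) = ψ β (HopfAlgebra.antipode (R := k) b) := by
    intro β b
    have := antipode_naturality (ψ β).toAlgHom
      (fun b => by simpa using hψc β b) (fun b => by simpa using hψe β b) b
    simpa using this
  refine ⟨?_, ?_, ?_, ?_, ?_, ?_⟩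
  · -- multiplication
    intro α β x y
    induction x using TensorProduct.induction_on with
    | zero => simp
    | add x₁ x₂ h₁ h₂ => simp only [map_add, LinearMap.add_apply, h₁, h₂]
    | tmul a b =>
      induction y using TensorProduct.induction_on with
      | zero => simp
      | add y₁ y₂ h₁ h₂ => simp only [map_add, h₁, h₂]
      | tmul a' b' =>
        obtain ⟨sA, hsA⟩ := TensorProduct.exists_finset (R := k) (Coalgebra.comul (R := k) a')
        obtain ⟨sB, hsB⟩ := TensorProduct.exists_finset (R := k) (Coalgebra.comul (R := k) b)
        choose FA hFA using fun x : A =>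
          TensorProduct.exists_finset (R := k) (Coalgebra.comul (R := k) x)
        choose FB hFB using fun x : B =>
          TensorProduct.exists_finset (R := k) (Coalgebra.comul (R := k) x)
        have repA : comul3 k A a' = ∑ x ∈ sA.sigma (fun p => FA p.1),
            ((x.2.1 ⊗ₜ[k] x.2.2) ⊗ₜ[k] x.1.2) := by
          rw [comul3, LinearMap.comp_apply, hsA, map_sum, Finset.sum_sigma]
          refine Finset.sum_congr rfl fun p _ => ?_
          rw [LinearMap.rTensor_tmul, hFA p.1, TensorProduct.sum_tmul]
        have repB : comul3 k B b = ∑ x ∈ sB.sigma (fun p => FB p.1),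
            ((x.2.1 ⊗ₜ[k] x.2.2) ⊗ₜ[k] x.1.2) := by
          rw [comul3, LinearMap.comp_apply, hsB, map_sum, Finset.sum_sigma]
          refine Finset.sum_congr rfl fun p _ => ?_
          rw [LinearMap.rTensor_tmul, hFB p.1, TensorProduct.sum_tmul]
        have repA' : comul3 k A (φ β a') = ∑ x ∈ sA.sigma (fun p => FA p.1),
            ((φ β x.2.1 ⊗ₜ[k] φ β x.2.2) ⊗ₜ[k] φ β x.1.2) := by
          rw [comul3, LinearMap.comp_apply, hφc β a', hsA, map_sum, map_sum, Finset.sum_sigma]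
          refine Finset.sum_congr rfl fun p _ => ?_
          simp only [TensorProduct.map_tmul, LinearMap.rTensor_tmul, AlgEquiv.toLinearMap_apply]
          rw [hφc β p.1, hFA p.1, map_sum, TensorProduct.sum_tmul]
          simp [TensorProduct.map_tmul]
        have repB' : comul3 k B (ψ β b) = ∑ x ∈ sB.sigma (fun p => FB p.1),
            ((ψ β x.2.1 ⊗ₜ[k] ψ β x.2.2) ⊗ₜ[k] ψ β x.1.2) := by
          rw [comul3, LinearMap.comp_apply, hψc β b, hsB, map_sum, map_sum, Finset.sum_sigma]
          refine Finset.sum_congr rfl fun p _ => ?_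
          simp only [TensorProduct.map_tmul, LinearMap.rTensor_tmul, AlgEquiv.toLinearMap_apply]
          rw [hψc β p.1, hFB p.1, map_sum, TensorProduct.sum_tmul]
          simp [TensorProduct.map_tmul]
        rw [hχ β a b, hχ β a' b',
          hm α a a' b b' _ _ (sA.sigma (fun p => FA p.1)) (sB.sigma (fun p => FB p.1))
            (fun x => x.2.1) (fun x => x.2.2) (fun x => x.1.2)
            (fun x => x.2.1) (fun x => x.2.2) (fun x => x.1.2) repA repB,
          hm (β * α * β⁻¹) (φ β a) (φ β a') (ψ β b) (ψ β b') _ _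
            (sA.sigma (fun p => FA p.1)) (sB.sigma (fun p => FB p.1))
            (fun x => φ β x.2.1) (fun x => φ β x.2.2) (fun x => φ β x.1.2)
            (fun x => ψ β x.2.1) (fun x => ψ β x.2.2) (fun x => ψ β x.1.2) repA' repB']
        rw [map_sum]
        refine Finset.sum_congr rfl fun i _ => ?_
        rw [map_sum]
        refine Finset.sum_congr rfl fun j _ => ?_
        rw [map_smul, hχ β]
        have hcoef : p.σ ((φ (β * α * β⁻¹)).toAlgHom (φ β i.2.1))
            (HopfAlgebra.antipode (R := k) (ψ β j.2.1))
            = p.σ ((φ α).toAlgHom i.2.1) (HopfAlgebra.antipode (R := k) j.2.1) := by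
          change p.σ (φ (β * α * β⁻¹) (φ β i.2.1)) _ = p.σ (φ α i.2.1) _
          rw [conj_aux φ β α, hS β, hcompat]
        rw [hcoef, map_mul, map_mul, hcompat β]
  · -- unit
    intro β
    rw [hχ β 1 1, map_one, map_one]
  · -- bijectivity
    intro β
    have h : χ β = (TensorProduct.congr (φ β).toLinearEquiv (ψ β).toLinearEquiv).toLinearMap := by
      apply TensorProduct.ext'
      intro a b
      rw [hχ β a b]
      simp [TensorProduct.congr_tmul]
    rw [h]
    exact (TensorProduct.congr (φ β).toLinearEquiv (ψ β).toLinearEquiv).bijective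
  · -- comultiplication
    intro α γ β x
    induction x using TensorProduct.induction_on with
    | zero => simp
    | add x₁ x₂ h₁ h₂ => simp only [map_add, h₁, h₂]
    | tmul a b =>
      obtain ⟨sA, hsA⟩ := TensorProduct.exists_finset (R := k) (Coalgebra.comul (R := k) a)
      obtain ⟨sB, hsB⟩ := TensorProduct.exists_finset (R := k) (Coalgebra.comul (R := k) b)
      have h1 : Coalgebra.comul (R := k) (φ β a)
          = ∑ p ∈ sA, φ β p.1 ⊗ₜ[k] φ β p.2 := by
        rw [hφc β a, hsA, map_sum]; simp
      have h2 : Coalgebra.comul (R := k) (ψ β b)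
          = ∑ q ∈ sB, ψ β q.1 ⊗ₜ[k] ψ β q.2 := by
        rw [hψc β b, hsB, map_sum]; simp
      rw [hχ β a b,
        hΔ α γ a b _ _ sA sB Prod.fst Prod.snd Prod.fst Prod.snd hsA hsB,
        hΔ (β * α * β⁻¹) (β * γ * β⁻¹) (φ β a) (ψ β b) _ _ sA sB
          (fun p => φ β p.1) (fun p => φ β p.2) (fun q => ψ β q.1) (fun q => ψ β q.2) h1 h2,
        map_sum]
      refine Finset.sum_congr rfl fun i _ => ?_
      rw [map_sum]
      refine Finset.sum_congr rfl fun j _ => ?_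
      rw [TensorProduct.map_tmul, hχ β, hχ β, conj_aux φ β γ]
  · -- counit
    intro β x
    induction x using TensorProduct.induction_on with
    | zero => simp
    | add x₁ x₂ h₁ h₂ => simp only [map_add, h₁, h₂]
    | tmul a b =>
      rw [hχ β a b]
      simp only [LinearMap.comp_apply, TensorProduct.map_tmul, LinearMap.mul'_apply]
      rw [hφe β a, hψe β b]
  · -- composition
    intro α β x
    induction x using TensorProduct.induction_on with
    | zero => simp
    | add x₁ x₂ h₁ h₂ => simp only [map_add, h₁, h₂]
    | tmul a b =>
      rw [hχ β a b, hχ α, hχ (α * β) a b, map_mul φ, map_mul ψ,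
        AlgEquiv.mul_apply, AlgEquiv.mul_apply]
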